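/- There exist three distinct points A, B, C on the unit circle S^1 ⊆ R^2 such that the set {A, B, C} is not a spherical suborbit of any finite group action: for every n ≥ 2, every linear isometric embedding ι : R^2 → R^n, every finite subgroup G of the orthogonal group O(n), and every v ∈ S^{n-1}, the three points ι(A), ι(B), ι(C) are not all contained in the orbit G·v. -/

import Mathlib

open Metric

open Polynomial

private lemma isIntegral_of_mem_finite_submonoid {A : Type*} [Ring A]
    (S : Submonoid A) (hS : (S : Set A).Finite) {x : A}
    (hx : x ∈ Algebra.adjoin ℤ (S : Set A)) : IsIntegral ℤ x := by
  refine IsIntegral.of_mem_of_fg (Algebra.adjoin ℤ (S : Set A)) ?_ x hx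
  rw [Algebra.adjoin_eq_span, Submonoid.closure_eq]
  exact Submodule.fg_span hS

/-- `2⁻¹` is not an algebraic integer. -/
private lemma not_isIntegral_half : ¬ IsIntegral ℤ ((2:ℝ)⁻¹) := by
  intro h
  have h2 : ((2:ℝ)⁻¹) = algebraMap ℚ ℝ ((2:ℚ)⁻¹) := by
    rw [map_inv₀, map_ofNat]
  rw [h2] at h
  have hq : IsIntegral ℤ ((2:ℚ)⁻¹) :=
    (isIntegral_algebraMap_iff (algebraMap ℚ ℝ).injective).mp h
  obtain ⟨y, hy⟩ := IsIntegrallyClosed.isIntegral_iff.mp hq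
  have : (y : ℚ) = (2:ℚ)⁻¹ := by exact_mod_cast hy
  have : (2 * y : ℚ) = 1 := by rw [this]; norm_num
  have : (2 * y : ℤ) = 1 := by exact_mod_cast this
  omega

private lemma euclidean_norm_two (a b : ℝ) :
    ‖(WithLp.equiv 2 (Fin 2 → ℝ)).symm ![a, b]‖ = Real.sqrt (a ^ 2 + b ^ 2) := by
  rw [EuclideanSpace.norm_eq]
  congr 1
  rw [Fin.sum_univ_two]
  simp [Real.norm_eq_abs, sq_abs]

/-- **Theorem 2 (a three-point set on `S^1` that is not a spherical suborbit of any
finite group action).** There are three distinct points `A, B, C` on the unit circle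
such that for every `n ≥ 2`, every linear isometric embedding `ι : ℝ² → ℝⁿ`, every
finite subgroup `G` of the orthogonal group of `ℝⁿ`, and every unit vector `v`, the
points `ι A, ι B, ι C` are not all contained in the orbit `G·v`. -/
theorem exists_triple_not_spherical_suborbit :
    ∃ A B C : EuclideanSpace ℝ (Fin 2),
      ‖A‖ = 1 ∧ ‖B‖ = 1 ∧ ‖C‖ = 1 ∧ A ≠ B ∧ A ≠ C ∧ B ≠ C ∧
      ∀ n : ℕ, 2 ≤ n →
        ∀ ι : EuclideanSpace ℝ (Fin 2) →ₗᵢ[ℝ] EuclideanSpace ℝ (Fin n),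
        ∀ G : Subgroup (EuclideanSpace ℝ (Fin n) ≃ₗᵢ[ℝ] EuclideanSpace ℝ (Fin n)),
          Finite G →
        ∀ v : EuclideanSpace ℝ (Fin n), ‖v‖ = 1 →
          ¬ (∀ x ∈ ({A, B, C} : Set (EuclideanSpace ℝ (Fin 2))),
              ∃ g ∈ G,
                (g : EuclideanSpace ℝ (Fin n) ≃ₗᵢ[ℝ] EuclideanSpace ℝ (Fin n)) v = ι x) := by
  have h15 : Real.sqrt 15 > 0 := Real.sqrt_pos.mpr (by norm_num)
  have hsq15 : Real.sqrt 15 ^ 2 = 15 := Real.sq_sqrt (by norm_num)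
  set e := (WithLp.equiv 2 (Fin 2 → ℝ)).symm with he
  refine ⟨e ![4⁻¹, Real.sqrt 15 / 4], e ![4⁻¹, -(Real.sqrt 15 / 4)], e ![1, 0],
    ?_, ?_, ?_, ?_, ?_, ?_, ?_⟩
  · rw [euclidean_norm_two]
    rw [show (4:ℝ)⁻¹ ^ 2 + (Real.sqrt 15 / 4) ^ 2 = 1 by
      rw [div_pow, hsq15]; norm_num]
    exact Real.sqrt_one
  · rw [euclidean_norm_two]
    rw [show (4:ℝ)⁻¹ ^ 2 + (-(Real.sqrt 15 / 4)) ^ 2 = 1 by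
      rw [neg_pow, div_pow, hsq15]; norm_num]
    exact Real.sqrt_one
  · rw [euclidean_norm_two]; norm_num
  · intro h
    have := congrFun ((WithLp.equiv 2 (Fin 2 → ℝ)).symm.injective h) 1
    simp only [Matrix.cons_val_one, Matrix.head_cons, Matrix.cons_val_zero] at this
    nlinarith
  · intro h
    have := congrFun ((WithLp.equiv 2 (Fin 2 → ℝ)).symm.injective h) 0
    simp only [Matrix.cons_val_zero] at this
    norm_num at this
  · intro h
    have := congrFun ((WithLp.equiv 2 (Fin 2 → ℝ)).symm.injective h) 0
    simp only [Matrix.cons_val_zero] at this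
    norm_num at this
  · intro n hn ι G hG v hv hall
    obtain ⟨g1, hg1m, hg1⟩ := hall (e ![4⁻¹, Real.sqrt 15 / 4]) (by simp)
    obtain ⟨g2, hg2m, hg2⟩ := hall (e ![4⁻¹, -(Real.sqrt 15 / 4)]) (by simp)
    obtain ⟨g3, hg3m, hg3⟩ := hall (e ![1, 0]) (by simp)
    -- the key linear relation A + B = 2⁻¹ • C
    have hABC : e ![4⁻¹, Real.sqrt 15 / 4] + e ![4⁻¹, -(Real.sqrt 15 / 4)]
        = (2:ℝ)⁻¹ • e ![1, 0] := by
      rw [he, WithLp.equiv_symm_apply, ← WithLp.toLp_add, ← WithLp.toLp_smul]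
      congr 1
      funext i
      fin_cases i <;> norm_num
    have hrel : g1 v + g2 v = (2:ℝ)⁻¹ • g3 v := by
      rw [hg1, hg2, hg3, ← ι.map_add, ← map_smul, hABC]
    -- move to the endomorphism algebra
    let φ : (EuclideanSpace ℝ (Fin n) ≃ₗᵢ[ℝ] EuclideanSpace ℝ (Fin n)) →*
        Module.End ℝ (EuclideanSpace ℝ (Fin n)) :=
      { toFun := fun u => u.toLinearEquiv.toLinearMap
        map_one' := by ext w; rfl
        map_mul' := fun u u' => by ext w; rfl }
    let ψ : ↥G →* Module.End ℝ (EuclideanSpace ℝ (Fin n)) := φ.comp G.subtype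
    let a : ↥G := ⟨g1, hg1m⟩
    let b : ↥G := ⟨g2, hg2m⟩
    let c : ↥G := ⟨g3, hg3m⟩
    set M : Module.End ℝ (EuclideanSpace ℝ (Fin n)) := ψ (c⁻¹ * a) + ψ (c⁻¹ * b) with hM
    have happ : ∀ u : ↥G, ∀ w : EuclideanSpace ℝ (Fin n),
        ψ u w = (u : EuclideanSpace ℝ (Fin n) ≃ₗᵢ[ℝ] EuclideanSpace ℝ (Fin n)) w :=
      fun u w => rfl
    have hMv : M v = (2:ℝ)⁻¹ • v := by
      rw [hM, LinearMap.add_apply, happ, happ]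
      push_cast
      rw [LinearIsometryEquiv.coe_mul, LinearIsometryEquiv.coe_mul]
      simp only [Function.comp_apply]
      rw [← map_add, hrel, map_smul, LinearIsometryEquiv.coe_inv,
        LinearIsometryEquiv.symm_apply_apply]
    -- M is integral over ℤ
    have hint : IsIntegral ℤ M := by
      refine isIntegral_of_mem_finite_submonoid (MonoidHom.mrange ψ) ?_ ?_
      · rw [MonoidHom.coe_mrange]; exact Set.finite_range ψ
      · exact Subalgebra.add_mem _
          (Algebra.subset_adjoin ⟨c⁻¹ * a, rfl⟩)
          (Algebra.subset_adjoin ⟨c⁻¹ * b, rfl⟩)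
    obtain ⟨p, pmonic, hp⟩ := hint
    -- evaluate at the eigenvector v
    have hv0 : v ≠ 0 := by intro h0; rw [h0, norm_zero] at hv; norm_num at hv
    have heig : M.HasEigenvector ((2:ℝ)⁻¹) v :=
      ⟨Module.End.mem_eigenspace_iff.mpr hMv, hv0⟩
    have hq : aeval M (p.map (algebraMap ℤ ℝ)) = 0 := by
      rw [aeval_map_algebraMap]
      exact hp
    have := Module.End.aeval_apply_of_hasEigenvector (p := p.map (algebraMap ℤ ℝ)) heig
    rw [hq] at this
    simp only [LinearMap.zero_apply] at this
    have hroot : (p.map (algebraMap ℤ ℝ)).eval ((2:ℝ)⁻¹) = 0 := by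
      rcases smul_eq_zero.mp this.symm with h | h
      · exact h
      · exact absurd h hv0
    rw [eval_map] at hroot
    exact not_isIntegral_half ⟨p, pmonic, hroot⟩
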